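/- arXiv:1812.00721 — 2 statements merged into one kernel-verified Lean document; each statement's English description precedes it below -/
import Mathlib

section
/- Let X₁, …, Xₙ be processes on [0,1] such that the vector process (X₁, …, Xₙ) satisfies the Sign Choice property, and let y₁, …, yₙ ∈ {0,1} be arbitrary labels. Then, with probability one, there exists t₀ ∈ [0,1] such that Xᵢ(t₀) > 0 for all i with yᵢ = 1 and Xᵢ(t₀) < 0 for all i with yᵢ = 0; consequently the supremum of the RKHS logistic log-likelihood over β ∈ H(K), β₀ ∈ ℝ equals 0 and is not attained, i.e. the MLE does not exist. -/
open MeasureTheory Finset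

theorem mle_nonexistence_of_sign_choice
    {Ω : Type*} [MeasurableSpace Ω] (μ : Measure Ω) [IsProbabilityMeasure μ]
    {n : ℕ} (hn : 0 < n) (X : Fin n → ℝ → Ω → ℝ)
    -- Sign Choice property of the vector process (X₁, …, Xₙ) on [0,1]
    (hSC : ∀ s : Fin n → ℝ, (∀ i, s i = 1 ∨ s i = -1) →
      ∀ᵐ ω ∂μ, ∃ t₀ ∈ Set.Icc (0:ℝ) 1, ∀ i, Real.sign (X i t₀ ω) = s i)
    -- labels
    (y : Fin n → ℝ) (hy : ∀ i, y i = 0 ∨ y i = 1)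
    -- the RKHS `H(K)` and the pairing `⟨β, x⟩_K` (inverse Loève isometry)
    {H : Type*} (ev : H → (ℝ → ℝ) → ℝ)
    -- for every `t₀ ∈ [0,1]` and `c ∈ ℝ`, the function `c·K(t₀,·)` lies in `H(K)`
    -- and pairs with a trajectory `x` to give `c·x(t₀)`
    (hker : ∀ t₀ ∈ Set.Icc (0:ℝ) 1, ∀ c : ℝ, ∃ β : H,
      ∀ x : ℝ → ℝ, ev β x = c * x t₀) :
    ∀ᵐ ω ∂μ,
      (∃ t₀ ∈ Set.Icc (0:ℝ) 1,
        (∀ i, y i = 1 → 0 < X i t₀ ω) ∧ (∀ i, y i = 0 → X i t₀ ω < 0)) ∧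
      IsLUB { L : ℝ | ∃ (β : H) (β₀ : ℝ),
          L = (1 / (n : ℝ)) * ∑ i, Real.log
            (((1 + Real.exp (-β₀ - ev β (fun t => X i t ω)))⁻¹) ^ (y i) *
              (1 - (1 + Real.exp (-β₀ - ev β (fun t => X i t ω)))⁻¹) ^ (1 - y i)) } 0 ∧
      (0 : ℝ) ∉ { L : ℝ | ∃ (β : H) (β₀ : ℝ),
          L = (1 / (n : ℝ)) * ∑ i, Real.log
            (((1 + Real.exp (-β₀ - ev β (fun t => X i t ω)))⁻¹) ^ (y i) *
              (1 - (1 + Real.exp (-β₀ - ev β (fun t => X i t ω)))⁻¹) ^ (1 - y i)) } := by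
  classical
  have hnemp : Nonempty (Fin n) := Fin.pos_iff_nonempty.mp hn
  have hne : (Finset.univ : Finset (Fin n)).Nonempty := Finset.univ_nonempty
  have hnpos : (0:ℝ) < (n:ℝ) := by exact_mod_cast hn
  have hppos : ∀ u : ℝ, 0 < (1 + Real.exp u)⁻¹ := fun u => by positivity
  have hplt : ∀ u : ℝ, (1 + Real.exp u)⁻¹ < 1 := by
    intro u
    have h1 : (1:ℝ) < 1 + Real.exp u := by nlinarith [Real.exp_pos u]
    exact inv_lt_one_of_one_lt₀ h1
  have hflip : ∀ v : ℝ, 1 - (1 + Real.exp v)⁻¹ = (1 + Real.exp (-v))⁻¹ := by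
    intro v
    have h2 : (0:ℝ) < Real.exp v := Real.exp_pos v
    rw [Real.exp_neg]
    field_simp
    ring
  have hlogneg : ∀ (i : Fin n) (u : ℝ),
      Real.log ((1 + Real.exp u)⁻¹ ^ (y i) * (1 - (1 + Real.exp u)⁻¹) ^ (1 - y i)) < 0 := by
    intro i u
    rcases hy i with h | h
    · rw [h]
      simp only [Real.rpow_zero, sub_zero, Real.rpow_one, one_mul]
      exact Real.log_neg (by nlinarith [hplt u]) (by nlinarith [hppos u])
    · rw [h]
      simp only [Real.rpow_one, sub_self, Real.rpow_zero, mul_one]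
      exact Real.log_neg (hppos u) (hplt u)
  have hlogbound : ∀ w : ℝ, -Real.exp (-w) ≤ Real.log (1 + Real.exp (-w))⁻¹ := by
    intro w
    rw [Real.log_inv]
    have h := Real.log_le_sub_one_of_pos (show (0:ℝ) < 1 + Real.exp (-w) by positivity)
    linarith
  have hs' : ∀ i, (fun i => if y i = 1 then (1:ℝ) else -1) i = 1 ∨
      (fun i => if y i = 1 then (1:ℝ) else -1) i = -1 := fun i => by
    by_cases h : y i = 1 <;> simp [h]
  filter_upwards [hSC _ hs'] with ω hω
  obtain ⟨t₀, ht₀, hsign⟩ := hω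
  have hpos : ∀ i, y i = 1 → 0 < X i t₀ ω := by
    intro i hi
    have h := hsign i
    simp only [hi, if_pos rfl] at h
    by_contra hc
    push_neg at hc
    rcases lt_or_eq_of_le hc with hlt | heq
    · rw [Real.sign_of_neg hlt] at h; norm_num at h
    · rw [heq, Real.sign_zero] at h; norm_num at h
  have hneg : ∀ i, y i = 0 → X i t₀ ω < 0 := by
    intro i hi
    have h := hsign i
    have hne1 : y i ≠ 1 := by rw [hi]; norm_num
    simp only [hne1, if_false] at h
    by_contra hc
    push_neg at hc
    rcases lt_or_eq_of_le hc with hlt | heq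
    · rw [Real.sign_of_pos hlt] at h; norm_num at h
    · rw [← heq, Real.sign_zero] at h; norm_num at h
  set S : Set ℝ := { L : ℝ | ∃ (β : H) (β₀ : ℝ),
      L = (1 / (n : ℝ)) * ∑ i, Real.log
        (((1 + Real.exp (-β₀ - ev β (fun t => X i t ω)))⁻¹) ^ (y i) *
          (1 - (1 + Real.exp (-β₀ - ev β (fun t => X i t ω)))⁻¹) ^ (1 - y i)) } with hS
  have hub : ∀ L ∈ S, L < 0 := by
    rintro L ⟨β, β₀, rfl⟩
    have hsum : (∑ i, Real.log
        (((1 + Real.exp (-β₀ - ev β (fun t => X i t ω)))⁻¹) ^ (y i) *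
          (1 - (1 + Real.exp (-β₀ - ev β (fun t => X i t ω)))⁻¹) ^ (1 - y i))) < 0 :=
      Finset.sum_neg (fun i _ => hlogneg i _) hne
    exact mul_neg_of_pos_of_neg (by positivity) hsum
  refine ⟨⟨t₀, ht₀, hpos, hneg⟩, ⟨fun L hL => (hub L hL).le, ?_⟩, fun h0 => absurd (hub 0 h0) (lt_irrefl 0)⟩
  intro b hb
  by_contra hbneg
  push_neg at hbneg
  set ε : ℝ := -b / 2 with hε
  have hεpos : 0 < ε := by simp [hε]; linarith
  set a : Fin n → ℝ := fun i => if y i = 1 then X i t₀ ω else -X i t₀ ω with ha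
  have hapos : ∀ i, 0 < a i := by
    intro i
    rcases hy i with h | h
    · have hne1 : y i ≠ 1 := by rw [h]; norm_num
      simp only [ha, hne1, if_false]
      linarith [hneg i h]
    · simp only [ha, h, if_pos rfl]
      exact hpos i h
  set m : ℝ := Finset.univ.inf' hne a with hm
  have hmpos : 0 < m := (Finset.lt_inf'_iff hne).mpr (fun i _ => hapos i)
  set c : ℝ := (1 + |Real.log ε|) / m with hc
  have hcpos : 0 < c := by positivity
  obtain ⟨β, hβ⟩ := hker t₀ ht₀ c
  have hexp : ∀ i, Real.exp (-(c * a i)) ≤ ε := by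
    intro i
    have h1 : c * m = 1 + |Real.log ε| := div_mul_cancel₀ _ hmpos.ne'
    have h2 : c * m ≤ c * a i :=
      mul_le_mul_of_nonneg_left (Finset.inf'_le _ (Finset.mem_univ i)) hcpos.le
    have h3 : -(c * a i) ≤ Real.log ε := by
      have := neg_abs_le (Real.log ε)
      linarith
    calc Real.exp (-(c * a i)) ≤ Real.exp (Real.log ε) := Real.exp_le_exp.mpr h3
      _ = ε := Real.exp_log hεpos
  have hterm : ∀ i, -ε ≤ Real.log
      (((1 + Real.exp (-(0:ℝ) - ev β (fun t => X i t ω)))⁻¹) ^ (y i) *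
        (1 - (1 + Real.exp (-(0:ℝ) - ev β (fun t => X i t ω)))⁻¹) ^ (1 - y i)) := by
    intro i
    have hev : ev β (fun t => X i t ω) = c * X i t₀ ω := hβ _
    have key : -ε ≤ Real.log (1 + Real.exp (-(c * a i)))⁻¹ :=
      le_trans (neg_le_neg (hexp i)) (hlogbound (c * a i))
    rcases hy i with h | h
    · have hne1 : y i ≠ 1 := by rw [h]; norm_num
      have hai : a i = -X i t₀ ω := by simp [ha, hne1]
      rw [h]
      simp only [Real.rpow_zero, sub_zero, Real.rpow_one, one_mul, hev]
      have harg : -(0:ℝ) - c * X i t₀ ω = c * a i := by rw [hai]; try ring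
      rw [harg, hflip (c * a i)]
      exact key
    · have hai : a i = X i t₀ ω := by simp only [ha]; exact if_pos h
      rw [h]
      simp only [Real.rpow_one, sub_self, Real.rpow_zero, mul_one, hev]
      have harg : -(0:ℝ) - c * X i t₀ ω = -(c * a i) := by rw [hai]; try ring
      rw [harg]
      exact key
  set L : ℝ := (1 / (n : ℝ)) * ∑ i, Real.log
      (((1 + Real.exp (-(0:ℝ) - ev β (fun t => X i t ω)))⁻¹) ^ (y i) *
        (1 - (1 + Real.exp (-(0:ℝ) - ev β (fun t => X i t ω)))⁻¹) ^ (1 - y i)) with hL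
  have hLmem : L ∈ S := ⟨β, 0, rfl⟩
  have hsumge : -((n:ℝ) * ε) ≤ ∑ i, Real.log
      (((1 + Real.exp (-(0:ℝ) - ev β (fun t => X i t ω)))⁻¹) ^ (y i) *
        (1 - (1 + Real.exp (-(0:ℝ) - ev β (fun t => X i t ω)))⁻¹) ^ (1 - y i)) := by
    calc -((n:ℝ) * ε) = ∑ _i : Fin n, (-ε) := by
          simp [Finset.sum_const, nsmul_eq_mul]; try ring
      _ ≤ _ := Finset.sum_le_sum (fun i _ => hterm i)
  have hLge : -ε ≤ L := by
    have := mul_le_mul_of_nonneg_left hsumge (by positivity : (0:ℝ) ≤ 1 / (n:ℝ))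
    have heq : (1 / (n:ℝ)) * (-((n:ℝ) * ε)) = -ε := by field_simp
    rw [hL]
    linarith [heq ▸ this]
  have hbL : b < L := by
    have : -ε = b / 2 := by rw [hε]; ring
    linarith
  exact absurd (hb hLmem) (not_le.mpr hbL)
end

section
/- Suppose Y given X follows the logistic model with true parameters β* (slope) and β₀* (intercept), i.e. P(Y=1|X) = σ(β₀* + Ψ_X^{−1}(β*)). If (β, β₀) is any parameter pair such that the expected log-likelihood L(β, β₀) equals L(β*, β₀*), and the random variables Ψ_X^{−1}(β) and Ψ_X^{−1}(β*) both have mean zero while Ψ_X is injective, then β₀ = β₀* and β = β*. -/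
noncomputable def lgA (t : ℝ) : ℝ := Real.log (1 + Real.exp (-t))

noncomputable def hfun (s t : ℝ) : ℝ := lgA t + (1 - (1 + Real.exp (-s))⁻¹) * t

lemma A_pos (t : ℝ) : (0:ℝ) < 1 + Real.exp (-t) := by positivity

lemma hfun_hasDeriv (s t : ℝ) :
    HasDerivAt (hfun s) ((1 + Real.exp (-t))⁻¹ - (1 + Real.exp (-s))⁻¹) t := by
  have h0 : HasDerivAt (fun u : ℝ => Real.exp (-u)) (-Real.exp (-t)) t := by
    simpa [Function.comp_def] using (Real.hasDerivAt_exp (-t)).comp t (hasDerivAt_neg t)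
  have h1 : HasDerivAt (fun u : ℝ => 1 + Real.exp (-u)) (-Real.exp (-t)) t :=
    h0.const_add 1
  have h2 := h1.log (A_pos t).ne'
  have h3 : HasDerivAt (fun u : ℝ => (1 - (1 + Real.exp (-s))⁻¹) * u)
      (1 - (1 + Real.exp (-s))⁻¹) t := by
    simpa using (hasDerivAt_id t).const_mul (1 - (1 + Real.exp (-s))⁻¹)
  have := h2.add h3
  refine HasDerivAt.congr_deriv this ?_
  have hA := (A_pos t).ne'
  field_simp
  ring

lemma sigma_strictMono : StrictMono (fun t : ℝ => (1 + Real.exp (-t))⁻¹) := by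
  intro a b hab
  have h1 : Real.exp (-b) < Real.exp (-a) := Real.exp_lt_exp.2 (by linarith)
  exact inv_strictAnti₀ (A_pos b) (by linarith)

lemma hfun_lt (s t : ℝ) (h : t ≠ s) : hfun s s < hfun s t := by
  have hd : ∀ x : ℝ, deriv (hfun s) x = (1 + Real.exp (-x))⁻¹ - (1 + Real.exp (-s))⁻¹ :=
    fun x => (hfun_hasDeriv s x).deriv
  have hc : Continuous (hfun s) := by
    have : Differentiable ℝ (hfun s) := fun x => (hfun_hasDeriv s x).differentiableAt
    exact this.continuous
  rcases lt_or_gt_of_ne h with hlt | hgt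
  · -- t < s : strictly anti on [t, s]
    have := strictAntiOn_of_deriv_neg (convex_Icc t s) (hc.continuousOn)
      (fun x hx => by
        rw [interior_Icc] at hx
        rw [hd]
        have := sigma_strictMono hx.2
        simpa using sub_neg.2 this)
    exact this (Set.left_mem_Icc.2 hlt.le) (Set.right_mem_Icc.2 hlt.le) hlt
  · -- s < t : strictly mono on [s, t]
    have := strictMonoOn_of_deriv_pos (convex_Icc s t) (hc.continuousOn)
      (fun x hx => by
        rw [interior_Icc] at hx
        rw [hd]
        have := sigma_strictMono hx.1
        simpa using sub_pos.2 this)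
    exact this (Set.left_mem_Icc.2 hgt.le) (Set.right_mem_Icc.2 hgt.le) hgt

lemma hfun_le (s t : ℝ) : hfun s s ≤ hfun s t := by
  rcases eq_or_ne t s with rfl | h
  · exact le_refl _
  · exact (hfun_lt s t h).le

lemma integrand_eq (s t : ℝ) :
    (1 + Real.exp (-s))⁻¹ * Real.log ((1 + Real.exp (-t))⁻¹) +
      (1 - (1 + Real.exp (-s))⁻¹) * Real.log (1 - (1 + Real.exp (-t))⁻¹) =
    -(hfun s t) := by
  have hA := A_pos t
  have h1 : 1 - (1 + Real.exp (-t))⁻¹ = Real.exp (-t) * (1 + Real.exp (-t))⁻¹ := by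
    field_simp
    ring
  rw [h1, Real.log_mul (Real.exp_ne_zero _) (inv_ne_zero hA.ne'), Real.log_exp,
    Real.log_inv]
  unfold hfun lgA
  ring

lemma lgA_nonneg (t : ℝ) : 0 ≤ lgA t := Real.log_nonneg (by nlinarith [Real.exp_pos (-t)])

lemma lgA_le (t : ℝ) : lgA t ≤ Real.log 2 + |t| := by
  have h1 : 1 + Real.exp (-t) ≤ 2 * Real.exp |t| := by
    have h2 : Real.exp (-t) ≤ Real.exp |t| := Real.exp_le_exp.2 (neg_le_abs t)
    have h3 : (1:ℝ) ≤ Real.exp |t| := Real.one_le_exp (abs_nonneg t)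
    linarith
  calc lgA t ≤ Real.log (2 * Real.exp |t|) := Real.log_le_log (A_pos t) h1
    _ = Real.log 2 + |t| := by rw [Real.log_mul two_ne_zero (Real.exp_ne_zero _), Real.log_exp]

lemma sigma_mem (s : ℝ) : 0 < (1 + Real.exp (-s))⁻¹ ∧ (1 + Real.exp (-s))⁻¹ < 1 := by
  constructor
  · positivity
  · rw [inv_lt_one_iff₀]
    right
    have := Real.exp_pos (-s); linarith

lemma hfun_abs_le (s t : ℝ) : |hfun s t| ≤ Real.log 2 + 2 * |t| := by
  have h1 := lgA_nonneg t
  have h2 := lgA_le t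
  have h3 := sigma_mem s
  have h4 : |(1 - (1 + Real.exp (-s))⁻¹) * t| ≤ |t| := by
    rw [abs_mul]
    have : |1 - (1 + Real.exp (-s))⁻¹| ≤ 1 := by
      rw [abs_le]; constructor <;> [linarith [h3.1]; linarith [h3.2]]
    nlinarith [abs_nonneg t]
  calc |hfun s t| ≤ |lgA t| + |(1 - (1 + Real.exp (-s))⁻¹) * t| := abs_add_le _ _
    _ ≤ (Real.log 2 + |t|) + |t| := by rw [abs_of_nonneg h1]; linarith
    _ = Real.log 2 + 2 * |t| := by ring

open MeasureTheory

lemma hfun_integrable {Ω : Type*} [MeasurableSpace Ω] (μ : Measure Ω) [IsProbabilityMeasure μ]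
    (S T : Ω → ℝ) (hS : Integrable S μ) (hT : Integrable T μ) :
    Integrable (fun ω => hfun (S ω) (T ω)) μ := by
  have hTm := hT.aestronglyMeasurable
  have hSm := hS.aestronglyMeasurable
  have cA : Continuous (fun x : ℝ => 1 + Real.exp (-x)) :=
    continuous_const.add (Real.continuous_exp.comp continuous_neg)
  have c1 : AEStronglyMeasurable (fun ω => Real.log (1 + Real.exp (-(T ω)))) μ :=
    (cA.log (fun x => (A_pos x).ne')).comp_aestronglyMeasurable hTm
  have c2 : AEStronglyMeasurable (fun ω => 1 - (1 + Real.exp (-(S ω)))⁻¹) μ :=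
    (continuous_const.sub (cA.inv₀ (fun x => (A_pos x).ne'))).comp_aestronglyMeasurable hSm
  have hmeas : AEStronglyMeasurable (fun ω => hfun (S ω) (T ω)) μ := by
    unfold hfun lgA
    exact c1.add (c2.mul hTm)
  refine Integrable.mono ((integrable_const (Real.log 2)).add ((hT.abs).const_mul 2)) hmeas ?_
  filter_upwards with ω
  rw [Real.norm_eq_abs, Real.norm_eq_abs]
  exact le_trans (hfun_abs_le _ _) (le_abs_self _)

theorem logistic_parameter_identification
    {Ω : Type*} [MeasurableSpace Ω] (μ : Measure Ω) [IsProbabilityMeasure μ]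
    {H : Type*} (Ψinv : H → Ω → ℝ)
    -- injectivity of the Loève isometry (elements of `L(X)` are identified a.e.)
    (hΨinj : ∀ β β' : H, Ψinv β =ᵐ[μ] Ψinv β' → β = β')
    (βstar : H) (β₀star : ℝ) (β : H) (β₀ : ℝ)
    (hint : Integrable (Ψinv β) μ) (hintstar : Integrable (Ψinv βstar) μ)
    (hmean : ∫ ω, Ψinv β ω ∂μ = 0) (hmeanstar : ∫ ω, Ψinv βstar ω ∂μ = 0)
    -- expected log-likelihood
    (L : H → ℝ → ℝ)
    (hL : ∀ (b : H) (b₀ : ℝ), L b b₀ =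
      ∫ ω, ((1 + Real.exp (-β₀star - Ψinv βstar ω))⁻¹ *
              Real.log ((1 + Real.exp (-b₀ - Ψinv b ω))⁻¹) +
            (1 - (1 + Real.exp (-β₀star - Ψinv βstar ω))⁻¹) *
              Real.log (1 - (1 + Real.exp (-b₀ - Ψinv b ω))⁻¹)) ∂μ)
    (heq : L β β₀ = L βstar β₀star) :
    β₀ = β₀star ∧ β = βstar := by
  set T : Ω → ℝ := fun ω => β₀ + Ψinv β ω with hTdef
  set S : Ω → ℝ := fun ω => β₀star + Ψinv βstar ω with hSdef
  have hTint : Integrable T μ := (integrable_const β₀).add hint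
  have hSint : Integrable S μ := (integrable_const β₀star).add hintstar
  have hrw : ∀ (b : H) (b₀' : ℝ),
      (fun ω => ((1 + Real.exp (-β₀star - Ψinv βstar ω))⁻¹ *
              Real.log ((1 + Real.exp (-b₀' - Ψinv b ω))⁻¹) +
            (1 - (1 + Real.exp (-β₀star - Ψinv βstar ω))⁻¹) *
              Real.log (1 - (1 + Real.exp (-b₀' - Ψinv b ω))⁻¹)))
      = fun ω => -(hfun (β₀star + Ψinv βstar ω) (b₀' + Ψinv b ω)) := by
    intro b b₀'
    funext ω
    have h1 : -b₀' - Ψinv b ω = -(b₀' + Ψinv b ω) := by ring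
    have h2 : -β₀star - Ψinv βstar ω = -(β₀star + Ψinv βstar ω) := by ring
    rw [h1, h2]
    exact integrand_eq _ _
  have hLβ : L β β₀ = ∫ ω, -(hfun (S ω) (T ω)) ∂μ := by rw [hL, hrw]
  have hLβs : L βstar β₀star = ∫ ω, -(hfun (S ω) (S ω)) ∂μ := by rw [hL, hrw]
  have hIT : Integrable (fun ω => hfun (S ω) (T ω)) μ := hfun_integrable μ S T hSint hTint
  have hIS : Integrable (fun ω => hfun (S ω) (S ω)) μ := hfun_integrable μ S S hSint hSint
  have key : ∫ ω, (hfun (S ω) (T ω) - hfun (S ω) (S ω)) ∂μ = 0 := by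
    rw [integral_sub hIT hIS]
    have h1 : ∫ ω, -(hfun (S ω) (T ω)) ∂μ = - ∫ ω, hfun (S ω) (T ω) ∂μ := integral_neg _
    have h2 : ∫ ω, -(hfun (S ω) (S ω)) ∂μ = - ∫ ω, hfun (S ω) (S ω) ∂μ := integral_neg _
    rw [hLβ, hLβs, h1, h2] at heq
    linarith
  have hae : (fun ω => hfun (S ω) (T ω) - hfun (S ω) (S ω)) =ᵐ[μ] 0 :=
    (integral_eq_zero_iff_of_nonneg (fun ω => sub_nonneg.2 (hfun_le _ _)) (hIT.sub hIS)).1 key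
  have hTS : T =ᵐ[μ] S := by
    filter_upwards [hae] with ω hω
    simp only [Pi.zero_apply, sub_eq_zero] at hω
    by_contra hne
    exact (hfun_lt (S ω) (T ω) hne).ne' hω
  have hintT : ∫ ω, T ω ∂μ = β₀ := by
    simp [hTdef, integral_add (integrable_const β₀) hint, hmean]
  have hintS : ∫ ω, S ω ∂μ = β₀star := by
    simp [hSdef, integral_add (integrable_const β₀star) hintstar, hmeanstar]
  have hβ₀ : β₀ = β₀star := by
    rw [← hintT, ← hintS]
    exact integral_congr_ae hTS
  refine ⟨hβ₀, hΨinj β βstar ?_⟩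
  filter_upwards [hTS] with ω hω
  have : β₀ + Ψinv β ω = β₀star + Ψinv βstar ω := hω
  linarith [this, hβ₀]
end
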